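/- Let $U_1 \in \mathbb{R}^{m \times n_1}$ and $U_2 \in \mathbb{R}^{m \times n_2}$, let $L_1$ and $L_2$ be symmetric positive definite matrices of sizes $n_1 \times n_1$ and $n_2 \times n_2$, let $\gamma > 0$, and set $S_1 = U_1 L_1^{-1} U_1^\top + \gamma I_m$ and $S_2 = U_2 L_2^{-1} U_2^\top + \gamma I_m$. Let $W \subseteq \mathbb{R}^m$ be the span of all columns of $U_1$ and of $U_2$, let $\xi_1, \ldots, \xi_p$ be an orthonormal basis of $W$, and define the $p \times p$ matrices $\bar{S}_1, \bar{S}_2$ by $[\bar{S}_k]_{ij} = \xi_i^\top S_k \xi_j$. Then $\det\big((\tfrac{1}{2}S_1^{-1} + \tfrac{1}{2}S_2^{-1})^{-1}\big)^{1/2} \big/ \big(\det(S_1)^{1/4}\det(S_2)^{1/4}\big) = \det\big((\tfrac{1}{2}\bar{S}_1^{-1} + \tfrac{1}{2}\bar{S}_2^{-1})^{-1}\big)^{1/2} \big/ \big(\det(\bar{S}_1)^{1/4}\det(\bar{S}_2)^{1/4}\big)$. -/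

import Mathlib

open Matrix

/-- The Laplacian graph kernel value between two (positive definite) matrices. -/
noncomputable def lgKernel {k : Type*} [Fintype k] [DecidableEq k]
    (A B : Matrix k k ℝ) : ℝ :=
  (((1 / 2 : ℝ) • A⁻¹ + (1 / 2 : ℝ) • B⁻¹)⁻¹).det ^ ((1 : ℝ) / 2) /
    (A.det ^ ((1 : ℝ) / 4) * B.det ^ ((1 : ℝ) / 4))

lemma posDef_smul_one {k : Type*} [Fintype k] [DecidableEq k] {γ : ℝ} (hγ : 0 < γ) :
    ((γ • 1 : Matrix k k ℝ)).PosDef := by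
  rw [Matrix.smul_one_eq_diagonal]
  exact (Matrix.posDef_diagonal_iff).mpr fun _ => hγ

lemma posDef_smul {k : Type*} [Fintype k] [DecidableEq k] {M : Matrix k k ℝ}
    (hM : M.PosDef) {c : ℝ} (hc : 0 < c) : (c • M).PosDef := by
  rw [Matrix.posDef_iff_dotProduct_mulVec]
  constructor
  · unfold Matrix.IsHermitian
    rw [conjTranspose_smul, hM.1]
    simp
  · intro x hx
    have := hM.dotProduct_mulVec_pos hx
    rw [smul_mulVec, dotProduct_smul]
    positivity

lemma lgKernel_conj {k : Type*} [Fintype k] [DecidableEq k] (A B Q : Matrix k k ℝ)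
    (hQ : Q * Qᵀ = 1) : lgKernel (Q * A * Qᵀ) (Q * B * Qᵀ) = lgKernel A B := by
  have hQ' : Qᵀ * Q = 1 := mul_eq_one_comm.mp hQ
  have hQi : Q⁻¹ = Qᵀ := Matrix.inv_eq_right_inv hQ
  have hQti : Qᵀ⁻¹ = Q := Matrix.inv_eq_right_inv hQ'
  have hinv : ∀ M : Matrix k k ℝ, (Q * M * Qᵀ)⁻¹ = Q * M⁻¹ * Qᵀ := by
    intro M
    rw [Matrix.mul_inv_rev, Matrix.mul_inv_rev, hQi, hQti, Matrix.mul_assoc]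
  have hdet : ∀ M : Matrix k k ℝ, (Q * M * Qᵀ).det = M.det := by
    intro M
    rw [Matrix.det_mul, Matrix.det_mul]
    calc Q.det * M.det * Qᵀ.det = M.det * (Q.det * Qᵀ.det) := by ring
    _ = M.det * (Q * Qᵀ).det := by rw [Matrix.det_mul]
    _ = M.det := by rw [hQ, Matrix.det_one, mul_one]
  have hmid : (1 / 2 : ℝ) • (Q * A * Qᵀ)⁻¹ + (1 / 2 : ℝ) • (Q * B * Qᵀ)⁻¹ =
      Q * ((1 / 2 : ℝ) • A⁻¹ + (1 / 2 : ℝ) • B⁻¹) * Qᵀ := by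
    rw [hinv, hinv, Matrix.mul_add, Matrix.add_mul]
    rw [mul_smul_comm, mul_smul_comm, smul_mul_assoc, smul_mul_assoc]
  unfold lgKernel
  rw [hmid, hinv, hdet, hdet, hdet]

lemma lgKernel_submatrix {k l : Type*} [Fintype k] [DecidableEq k] [Fintype l] [DecidableEq l]
    (A B : Matrix k k ℝ) (e : l ≃ k) :
    lgKernel (A.submatrix e e) (B.submatrix e e) = lgKernel A B := by
  unfold lgKernel
  rw [Matrix.inv_submatrix_equiv, Matrix.inv_submatrix_equiv]
  have : (1 / 2 : ℝ) • A⁻¹.submatrix e e + (1 / 2 : ℝ) • B⁻¹.submatrix e e =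
      ((1 / 2 : ℝ) • A⁻¹ + (1 / 2 : ℝ) • B⁻¹).submatrix e e := by
    ext i j <;> simp
  rw [this, Matrix.inv_submatrix_equiv, Matrix.det_submatrix_equiv_self,
    Matrix.det_submatrix_equiv_self, Matrix.det_submatrix_equiv_self]

lemma lgKernel_fromBlocks {p q : ℕ} (A B : Matrix (Fin p) (Fin p) ℝ)
    (hA : A.PosDef) (hB : B.PosDef) {γ : ℝ} (hγ : 0 < γ) :
    lgKernel (fromBlocks A 0 0 (γ • 1 : Matrix (Fin q) (Fin q) ℝ))
             (fromBlocks B 0 0 (γ • 1)) = lgKernel A B := by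
  set G : Matrix (Fin q) (Fin q) ℝ := γ • 1 with hGdef
  have hG : G.PosDef := posDef_smul_one hγ
  have hGu : IsUnit G.det := isUnit_iff_ne_zero.mpr hG.det_pos.ne'
  have hGiu : IsUnit G⁻¹.det := isUnit_iff_ne_zero.mpr hG.inv.det_pos.ne'
  have hinvBlk : ∀ (M : Matrix (Fin p) (Fin p) ℝ) (N : Matrix (Fin q) (Fin q) ℝ),
      IsUnit M.det → IsUnit N.det →
      (fromBlocks M 0 0 N)⁻¹ = fromBlocks M⁻¹ 0 0 N⁻¹ := by
    intro M N hM hN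
    rw [Matrix.inv_fromBlocks_zero₂₁_of_isUnit_iff M 0 N (iff_of_true ((Matrix.isUnit_iff_isUnit_det M).mpr hM) ((Matrix.isUnit_iff_isUnit_det N).mpr hN))]
    simp
  have hAu : IsUnit A.det := isUnit_iff_ne_zero.mpr hA.det_pos.ne'
  have hBu : IsUnit B.det := isUnit_iff_ne_zero.mpr hB.det_pos.ne'
  have hC : ((1 / 2 : ℝ) • A⁻¹ + (1 / 2 : ℝ) • B⁻¹).PosDef :=
    (posDef_smul hA.inv (by norm_num)).add (posDef_smul hB.inv (by norm_num))
  have hCu : IsUnit ((1 / 2 : ℝ) • A⁻¹ + (1 / 2 : ℝ) • B⁻¹).det :=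
    isUnit_iff_ne_zero.mpr hC.det_pos.ne'
  have hsum : (1 / 2 : ℝ) • (fromBlocks A⁻¹ 0 0 G⁻¹) + (1 / 2 : ℝ) • (fromBlocks B⁻¹ 0 0 G⁻¹)
      = fromBlocks ((1 / 2 : ℝ) • A⁻¹ + (1 / 2 : ℝ) • B⁻¹) 0 0 G⁻¹ := by
    rw [Matrix.fromBlocks_smul, Matrix.fromBlocks_smul, Matrix.fromBlocks_add]
    congr 1 <;> try simp
    rw [← add_smul]; norm_num
  unfold lgKernel
  rw [hinvBlk A G hAu hGu, hinvBlk B G hBu hGu, hsum,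
    hinvBlk _ _ hCu hGiu, Matrix.nonsing_inv_nonsing_inv G hGu,
    Matrix.det_fromBlocks_zero₂₁, Matrix.det_fromBlocks_zero₂₁, Matrix.det_fromBlocks_zero₂₁]
  set a := (((1 / 2 : ℝ) • A⁻¹ + (1 / 2 : ℝ) • B⁻¹)⁻¹).det with hadef
  have ha : 0 < a := hC.inv.det_pos
  have hg : 0 < G.det := hG.det_pos
  have hdA : 0 < A.det := hA.det_pos
  have hdB : 0 < B.det := hB.det_pos
  rw [Real.mul_rpow ha.le hg.le, Real.mul_rpow hdA.le hg.le, Real.mul_rpow hdB.le hg.le]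
  have hhalf : G.det ^ ((1:ℝ)/2) = G.det ^ ((1:ℝ)/4) * G.det ^ ((1:ℝ)/4) := by
    rw [← Real.rpow_add hg]; norm_num
  have h4 : (0:ℝ) < G.det ^ ((1:ℝ)/4) := Real.rpow_pos_of_pos hg _
  rw [hhalf]
  field_simp

lemma posDef_conj {k : Type*} [Fintype k] [DecidableEq k] {M : Matrix k k ℝ}
    (hM : M.PosDef) (Q : Matrix k k ℝ) (hQ : Q * Qᵀ = 1) : (Q * M * Qᵀ).PosDef := by
  have hQ' : Qᵀ * Q = 1 := mul_eq_one_comm.mp hQ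
  rw [Matrix.posDef_iff_dotProduct_mulVec]
  constructor
  · have := Matrix.isHermitian_mul_mul_conjTranspose Q hM.1
    rwa [Matrix.conjTranspose_eq_transpose_of_trivial] at this
  · intro x hx
    have hxq : Qᵀ *ᵥ x ≠ 0 := by
      intro h
      apply hx
      have : (Q * Qᵀ) *ᵥ x = Q *ᵥ (Qᵀ *ᵥ x) := by rw [Matrix.mulVec_mulVec]
      rw [hQ, Matrix.one_mulVec, h, Matrix.mulVec_zero] at this
      exact this
    have := hM.dotProduct_mulVec_pos hxq
    have hrw : star x ⬝ᵥ ((Q * M * Qᵀ) *ᵥ x) = star (Qᵀ *ᵥ x) ⬝ᵥ (M *ᵥ (Qᵀ *ᵥ x)) := by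
      simp only [star_trivial]
      rw [← Matrix.mulVec_mulVec, ← Matrix.mulVec_mulVec, Matrix.dotProduct_mulVec,
        ← Matrix.mulVec_transpose]
    rw [hrw]
    exact this

lemma posDef_submatrix_equiv {k l : Type*} [Fintype k] [DecidableEq k] [Fintype l]
    [DecidableEq l] {M : Matrix k k ℝ} (hM : M.PosDef) (e : l ≃ k) :
    (M.submatrix e e).PosDef := by
  rw [Matrix.posDef_iff_dotProduct_mulVec]
  constructor
  · have h := hM.1
    unfold Matrix.IsHermitian at h ⊢
    rw [Matrix.conjTranspose_submatrix, h]
  · intro x hx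
    have hx' : (fun j => x (e.symm j)) ≠ 0 := by
      intro h
      apply hx
      funext i
      have := congrFun h (e i)
      simpa using this
    have := hM.dotProduct_mulVec_pos hx'
    convert this using 1
    simp only [star_trivial, dotProduct, Matrix.mulVec, Matrix.submatrix_apply]
    rw [← e.sum_comp (fun j => x (e.symm j) * _)]
    simp only [Equiv.symm_apply_apply]
    congr 1
    funext i
    congr 1
    rw [← e.sum_comp (fun j => M (e i) j * x (e.symm j))]
    simp

lemma posDef_fromBlocks₁₁ {p q : Type*} [Fintype p] [DecidableEq p] [Fintype q] [DecidableEq q]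
    {A : Matrix p p ℝ} {D : Matrix q q ℝ}
    (h : (Matrix.fromBlocks A 0 0 D).PosDef) : A.PosDef := by
  rw [Matrix.posDef_iff_dotProduct_mulVec]
  constructor
  · have h1 := h.1
    unfold Matrix.IsHermitian at h1 ⊢
    rw [Matrix.conjTranspose_eq_transpose_of_trivial] at h1 ⊢
    rw [Matrix.fromBlocks_transpose] at h1
    have := congrArg Matrix.toBlocks₁₁ h1
    simpa [Matrix.toBlocks_fromBlocks₁₁] using this
  · intro x hx
    have hx' : (Sum.elim x (0 : q → ℝ)) ≠ 0 := by
      intro h'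
      apply hx
      funext i
      exact congrFun h' (Sum.inl i)
    have := h.dotProduct_mulVec_pos hx'
    simpa [Matrix.fromBlocks_mulVec, sumElim_dotProduct_sumElim] using this

/-- The FLG kernel can be computed in any orthonormal basis of the
subspace `W` spanned by the columns of the feature matrices `U₁, U₂`:
projecting `S₁, S₂` to `W` leaves the kernel value unchanged. -/
theorem flg_kernel_subspace_projection {m n₁ n₂ p : ℕ}
    (U₁ : Matrix (Fin m) (Fin n₁) ℝ) (U₂ : Matrix (Fin m) (Fin n₂) ℝ)
    (L₁ : Matrix (Fin n₁) (Fin n₁) ℝ) (L₂ : Matrix (Fin n₂) (Fin n₂) ℝ)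
    (hL₁ : L₁.PosDef) (hL₂ : L₂.PosDef)
    (γ : ℝ) (hγ : 0 < γ)
    (S₁ S₂ : Matrix (Fin m) (Fin m) ℝ)
    (hS₁ : S₁ = U₁ * L₁⁻¹ * U₁ᵀ + γ • (1 : Matrix (Fin m) (Fin m) ℝ))
    (hS₂ : S₂ = U₂ * L₂⁻¹ * U₂ᵀ + γ • (1 : Matrix (Fin m) (Fin m) ℝ))
    (ξ : Fin p → (Fin m → ℝ))
    (hortho : ∀ i j, ξ i ⬝ᵥ ξ j = if i = j then (1 : ℝ) else 0)
    (hspan : Submodule.span ℝ (Set.range ξ) =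
      Submodule.span ℝ
        ((Set.range fun j => fun i => U₁ i j) ∪
          (Set.range fun j => fun i => U₂ i j)))
    (Sbar₁ Sbar₂ : Matrix (Fin p) (Fin p) ℝ)
    (hbar₁ : ∀ i j, Sbar₁ i j = ξ i ⬝ᵥ S₁.mulVec (ξ j))
    (hbar₂ : ∀ i j, Sbar₂ i j = ξ i ⬝ᵥ S₂.mulVec (ξ j)) :
    lgKernel S₁ S₂ = lgKernel Sbar₁ Sbar₂ := by
  classical
  -- positive definiteness of S₁, S₂
  have hSpd : ∀ {n : ℕ} (U : Matrix (Fin m) (Fin n) ℝ) (L : Matrix (Fin n) (Fin n) ℝ),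
      L.PosDef → (U * L⁻¹ * Uᵀ + γ • (1 : Matrix (Fin m) (Fin m) ℝ)).PosDef := by
    intro n U L hL
    refine Matrix.PosDef.posSemidef_add ?_ (posDef_smul_one hγ)
    have := (hL.inv.posSemidef).mul_mul_conjTranspose_same U
    rwa [Matrix.conjTranspose_eq_transpose_of_trivial] at this
  have hS₁pd : S₁.PosDef := hS₁ ▸ hSpd U₁ L₁ hL₁
  have hS₂pd : S₂.PosDef := hS₂ ▸ hSpd U₂ L₂ hL₂
  -- move to EuclideanSpace
  set ξE : Fin p → EuclideanSpace ℝ (Fin m) :=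
    fun i => (WithLp.equiv 2 (Fin m → ℝ)).symm (ξ i) with hξEdef
  have horthoE : Orthonormal ℝ ξE := by
    rw [orthonormal_iff_ite]
    intro i j
    have := hortho i j
    simpa [hξEdef, PiLp.inner_apply, RCLike.inner_apply, starRingEnd_apply,
      PiLp.toLp_apply, dotProduct, mul_comm] using this
  have hpm : p ≤ m := by
    have := horthoE.linearIndependent.fintype_card_le_finrank
    simpa [finrank_euclideanSpace] using this
  -- extend to an orthonormal basis
  set s : Set (Fin m) := {i | (i : ℕ) < p} with hs
  set v : Fin m → EuclideanSpace ℝ (Fin m) :=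
    fun i => if h : (i : ℕ) < p then ξE ⟨i, h⟩ else 0 with hvdef
  have hvon : Orthonormal ℝ (s.restrict v) := by
    rw [orthonormal_iff_ite]
    rintro ⟨i, hi⟩ ⟨j, hj⟩
    have hi' : (i : ℕ) < p := hi
    have hj' : (j : ℕ) < p := hj
    have h1 : s.restrict v ⟨i, hi⟩ = ξE ⟨i, hi'⟩ := dif_pos hi'
    have h2 : s.restrict v ⟨j, hj⟩ = ξE ⟨j, hj'⟩ := dif_pos hj'
    rw [h1, h2, orthonormal_iff_ite.mp horthoE]
    by_cases h : i = j
    · subst h; simp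
    · rw [if_neg, if_neg]
      · simp [Subtype.ext_iff, h]
      · simp only [Fin.ext_iff]
        exact fun hc => h (Fin.ext hc)
  obtain ⟨b, hb⟩ := hvon.exists_orthonormalBasis_extension_of_card_eq
    (by simp [finrank_euclideanSpace])
  have hbξ : ∀ i : Fin p, b (Fin.castLE hpm i) = ξE i := by
    intro i
    have hmem : (Fin.castLE hpm i) ∈ s := i.2
    rw [hb _ hmem]
    simp [hvdef, dif_pos i.2]
  -- the orthonormal basis as plain vectors
  set b' : Fin m → (Fin m → ℝ) := fun i => WithLp.equiv 2 (Fin m → ℝ) (b i) with hb'def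
  have hbon : ∀ i j, b' i ⬝ᵥ b' j = if i = j then (1 : ℝ) else 0 := by
    intro i j
    have := orthonormal_iff_ite.mp b.orthonormal i j
    simpa [hb'def, PiLp.inner_apply, RCLike.inner_apply, starRingEnd_apply,
      PiLp.toLp_apply, dotProduct, mul_comm] using this
  have hbξ' : ∀ i : Fin p, b' (Fin.castLE hpm i) = ξ i := by
    intro i
    rw [hb'def]
    simp only [hbξ i, hξEdef]
    exact (WithLp.equiv 2 (Fin m → ℝ)).apply_symm_apply (ξ i)
  -- the change of basis matrix
  set Q : Matrix (Fin m) (Fin m) ℝ := Matrix.of (fun i j => b' i j) with hQdef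
  have hQo : Q * Qᵀ = 1 := by
    ext i j
    rw [Matrix.mul_apply]
    have := hbon i j
    simp only [hQdef, Matrix.transpose_apply, Matrix.of_apply, Matrix.one_apply]
    simpa [dotProduct] using this
  -- vectors in the complement of the span are orthogonal to the span
  have hperp : ∀ j : Fin m, p ≤ (j : ℕ) →
      ∀ w ∈ Submodule.span ℝ (Set.range ξ), w ⬝ᵥ b' j = 0 := by
    intro j hj w hw
    induction hw using Submodule.span_induction with
    | mem w hw =>
      obtain ⟨i, rfl⟩ := hw
      rw [← hbξ' i, hbon]
      rw [if_neg]
      intro hc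
      have : (i : ℕ) = (j : ℕ) := by
        rw [← hc]
        rfl
      omega
    | zero => simp
    | add x y hx hy ihx ihy => simp [add_dotProduct, ihx, ihy]
    | smul c x hx ih => simp [smul_dotProduct, ih]
  -- S acts as γ on the orthogonal complement
  have key : ∀ {n : ℕ} (U : Matrix (Fin m) (Fin n) ℝ) (L : Matrix (Fin n) (Fin n) ℝ)
      (S : Matrix (Fin m) (Fin m) ℝ),
      S = U * L⁻¹ * Uᵀ + γ • (1 : Matrix (Fin m) (Fin m) ℝ) →
      (∀ a : Fin n, (fun i => U i a) ∈ Submodule.span ℝ (Set.range ξ)) →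
      ∀ j : Fin m, p ≤ (j : ℕ) → S *ᵥ b' j = γ • b' j := by
    intro n U L S hS hcols j hj
    have hUt : Uᵀ *ᵥ b' j = 0 := by
      funext a
      have := hperp j hj _ (hcols a)
      simpa [Matrix.mulVec, dotProduct, Matrix.transpose_apply] using this
    rw [hS, Matrix.add_mulVec, ← Matrix.mulVec_mulVec, ← Matrix.mulVec_mulVec, hUt]
    simp [Matrix.smul_mulVec]
  have hcols₁ : ∀ a : Fin n₁, (fun i => U₁ i a) ∈ Submodule.span ℝ (Set.range ξ) := by
    intro a
    rw [hspan]
    exact Submodule.subset_span (Set.mem_union_left _ (Set.mem_range_self a))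
  have hcols₂ : ∀ a : Fin n₂, (fun i => U₂ i a) ∈ Submodule.span ℝ (Set.range ξ) := by
    intro a
    rw [hspan]
    exact Submodule.subset_span (Set.mem_union_right _ (Set.mem_range_self a))
  have hkey₁ := key U₁ L₁ S₁ hS₁ hcols₁
  have hkey₂ := key U₂ L₂ S₂ hS₂ hcols₂
  -- the index equivalence
  have hpq : p + (m - p) = m := Nat.add_sub_cancel' hpm
  set e : (Fin p ⊕ Fin (m - p)) ≃ Fin m := finSumFinEquiv.trans (finCongr hpq) with hedef
  have hel : ∀ i' : Fin p, e (Sum.inl i') = Fin.castLE hpm i' := by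
    intro i'
    apply Fin.ext
    simp [hedef]
  have her : ∀ j' : Fin (m - p), p ≤ ((e (Sum.inr j')) : ℕ) := by
    intro j'
    have : ((e (Sum.inr j')) : ℕ) = p + (j' : ℕ) := by simp [hedef]
    omega
  have hbl : ∀ i' : Fin p, b' (e (Sum.inl i')) = ξ i' := by
    intro i'
    rw [hel, hbξ']
  -- block structure of the conjugated matrices
  have hblock : ∀ (S : Matrix (Fin m) (Fin m) ℝ) (Sb : Matrix (Fin p) (Fin p) ℝ),
      S.PosDef → (∀ j : Fin m, p ≤ (j : ℕ) → S *ᵥ b' j = γ • b' j) →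
      (∀ i j, Sb i j = ξ i ⬝ᵥ S.mulVec (ξ j)) →
      Q * S * Qᵀ = (Matrix.fromBlocks Sb 0 0
        (γ • (1 : Matrix (Fin (m - p)) (Fin (m - p)) ℝ))).submatrix e.symm e.symm := by
    intro S Sb hpd hfix hSb
    have hSsym : Sᵀ = S := by
      have := hpd.1
      rwa [Matrix.IsHermitian, Matrix.conjTranspose_eq_transpose_of_trivial] at this
    have hentry : ∀ i j, (Q * S * Qᵀ) i j = b' i ⬝ᵥ S *ᵥ b' j := by
      intro i j
      simp only [Matrix.mul_apply, Matrix.transpose_apply, hQdef, Matrix.of_apply,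
        dotProduct, Matrix.mulVec, Finset.sum_mul, Finset.mul_sum]
      rw [Finset.sum_comm]
      apply Finset.sum_congr rfl
      intro a _
      apply Finset.sum_congr rfl
      intro c _
      ring
    ext i j
    rw [hentry]
    rcases hi : e.symm i with i' | i' <;> rcases hj : e.symm j with j' | j' <;>
      rw [Equiv.symm_apply_eq] at hi hj <;> subst hi <;> subst hj <;>
      simp only [Matrix.submatrix_apply, Equiv.symm_apply_apply]
    · -- inl inl
      rw [hbl, hbl, Matrix.fromBlocks_apply₁₁, hSb]
    · -- inl inr
      rw [hfix _ (her j'), dotProduct_smul, hbon, Matrix.fromBlocks_apply₁₂]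
      have : e (Sum.inl i') ≠ e (Sum.inr j') := by
        intro hc
        exact Sum.inl_ne_inr (e.injective hc)
      simp [this]
    · -- inr inl
      rw [Matrix.dotProduct_mulVec, ← Matrix.mulVec_transpose, hSsym, hfix _ (her i'),
        smul_dotProduct, hbon, Matrix.fromBlocks_apply₂₁]
      have : e (Sum.inr i') ≠ e (Sum.inl j') := by
        intro hc
        exact Sum.inl_ne_inr (e.injective hc).symm
      simp [this]
    · -- inr inr
      rw [hfix _ (her j'), dotProduct_smul, hbon, Matrix.fromBlocks_apply₂₂]
      by_cases h : i' = j'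
      · subst h; simp
      · have : e (Sum.inr i') ≠ e (Sum.inr j') := by
          intro hc
          exact h (Sum.inr.inj (e.injective hc))
        simp [this, h, Matrix.one_apply]
  have hblk₁ := hblock S₁ Sbar₁ hS₁pd hkey₁ hbar₁
  have hblk₂ := hblock S₂ Sbar₂ hS₂pd hkey₂ hbar₂
  -- positive definiteness of the projected matrices
  have hfb : ∀ (S : Matrix (Fin m) (Fin m) ℝ) (Sb : Matrix (Fin p) (Fin p) ℝ),
      Q * S * Qᵀ = (Matrix.fromBlocks Sb 0 0
        (γ • (1 : Matrix (Fin (m - p)) (Fin (m - p)) ℝ))).submatrix e.symm e.symm →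
      S.PosDef → Sb.PosDef := by
    intro S Sb hblk hpd
    have h1 : (Matrix.fromBlocks Sb 0 0
        (γ • (1 : Matrix (Fin (m - p)) (Fin (m - p)) ℝ))) = (Q * S * Qᵀ).submatrix e e := by
      rw [hblk]
      ext i j
      simp
    have h2 : ((Q * S * Qᵀ).submatrix e e).PosDef :=
      posDef_submatrix_equiv (posDef_conj hpd Q hQo) e
    exact posDef_fromBlocks₁₁ (h1 ▸ h2)
  have hSb₁pd : Sbar₁.PosDef := hfb S₁ Sbar₁ hblk₁ hS₁pd
  have hSb₂pd : Sbar₂.PosDef := hfb S₂ Sbar₂ hblk₂ hS₂pd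
  -- conclude
  calc lgKernel S₁ S₂ = lgKernel (Q * S₁ * Qᵀ) (Q * S₂ * Qᵀ) :=
        (lgKernel_conj S₁ S₂ Q hQo).symm
    _ = lgKernel (Matrix.fromBlocks Sbar₁ 0 0
          (γ • (1 : Matrix (Fin (m - p)) (Fin (m - p)) ℝ)))
        (Matrix.fromBlocks Sbar₂ 0 0
          (γ • (1 : Matrix (Fin (m - p)) (Fin (m - p)) ℝ))) := by
        rw [hblk₁, hblk₂]
        exact lgKernel_submatrix _ _ e.symm
    _ = lgKernel Sbar₁ Sbar₂ := lgKernel_fromBlocks _ _ hSb₁pd hSb₂pd hγ
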